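/- Let ψ be an eigenfunction of H_{𝐆_N} (equilateral (q+1)-regular quantum graph, symmetric potential U, Kirchhoff coupling α) with eigenvalue λ ∉ σ₂ (i.e. s(λ) ≠ 0), and let ψ̊ be its vertex restriction. Then ‖ψ‖²_{L²(𝐆_N)} = [ ((q+1)/s²(λ)) ∫_0^L S_λ²(x)dx + (w(λ)/s²(λ)) ∫_0^L S_λ(L-x)S_λ(x)dx ] · ‖ψ̊‖²_{ℓ²(V_N)}. -/

import Mathlib

open Set

private lemma derivDiff {E : Type*} [NormedAddCommGroup E] [NormedSpace ℝ E]
    {f : ℝ → E} (hf : ContDiff ℝ 2 f) : Differentiable ℝ (deriv f) := by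
  have h2 : (2 : WithTop ℕ∞) = 1 + 1 := by norm_num
  rw [h2, contDiff_succ_iff_deriv] at hf
  exact hf.2.2.differentiable one_ne_zero

private lemma constOn {E : Type*} [NormedAddCommGroup E] [NormedSpace ℝ E]
    {L : ℝ} (hL : 0 < L) {f : ℝ → E} (hf : Differentiable ℝ f)
    (h : ∀ x ∈ Icc (0:ℝ) L, deriv f x = 0) : ∀ x ∈ Icc (0:ℝ) L, f x = f 0 := by
  apply constant_of_derivWithin_zero hf.differentiableOn
  intro x hx
  rw [(hf x).derivWithin ((uniqueDiffOn_Icc hL) x (Ico_subset_Icc_self hx))]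
  exact h x (Ico_subset_Icc_self hx)

/-- Representation of a solution of `f'' = (U - λ) f` on `[0,L]` in terms of the
fundamental system `C, S`. -/
private lemma rep {L : ℝ} (hL : 0 < L) {U : ℝ → ℝ} {lam : ℝ} {C S : ℝ → ℝ}
    (hC : ContDiff ℝ 2 C) (hS : ContDiff ℝ 2 S)
    (hCODE : ∀ x ∈ Icc (0:ℝ) L, deriv (deriv C) x = (U x - lam) * C x)
    (hSODE : ∀ x ∈ Icc (0:ℝ) L, deriv (deriv S) x = (U x - lam) * S x)
    (hC0 : C 0 = 1) (hC0' : deriv C 0 = 0) (hS0 : S 0 = 0) (hS0' : deriv S 0 = 1)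
    (f : ℝ → ℂ) (hf : ContDiff ℝ 2 f)
    (hfODE : ∀ x ∈ Icc (0:ℝ) L, deriv (deriv f) x = (((U x : ℝ) : ℂ) - (lam : ℂ)) * f x) :
    ∀ x ∈ Icc (0:ℝ) L, f x = f 0 * C x + deriv f 0 * S x := by
  have hfd : Differentiable ℝ f := hf.differentiable (by norm_num)
  have hf'd : Differentiable ℝ (deriv f) := derivDiff hf
  have hCd : Differentiable ℝ C := hC.differentiable (by norm_num)
  have hC'd : Differentiable ℝ (deriv C) := derivDiff hC
  have hSd : Differentiable ℝ S := hS.differentiable (by norm_num)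
  have hS'd : Differentiable ℝ (deriv S) := derivDiff hS
  -- Wronskian with S
  have HW1 : ∀ x : ℝ, HasDerivAt (fun y => deriv f y * ((S y : ℝ) : ℂ) - f y * ((deriv S y : ℝ) : ℂ))
      (deriv (deriv f) x * ((S x : ℝ):ℂ) + deriv f x * ((deriv S x : ℝ):ℂ)
        - (deriv f x * ((deriv S x : ℝ):ℂ) + f x * ((deriv (deriv S) x : ℝ):ℂ))) x := by
    intro x
    exact (((hf'd x).hasDerivAt.mul (hSd x).hasDerivAt.ofReal_comp).sub
      ((hfd x).hasDerivAt.mul (hS'd x).hasDerivAt.ofReal_comp))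
  have HW2 : ∀ x : ℝ, HasDerivAt (fun y => deriv f y * ((C y : ℝ) : ℂ) - f y * ((deriv C y : ℝ) : ℂ))
      (deriv (deriv f) x * ((C x : ℝ):ℂ) + deriv f x * ((deriv C x : ℝ):ℂ)
        - (deriv f x * ((deriv C x : ℝ):ℂ) + f x * ((deriv (deriv C) x : ℝ):ℂ))) x := by
    intro x
    exact (((hf'd x).hasDerivAt.mul (hCd x).hasDerivAt.ofReal_comp).sub
      ((hfd x).hasDerivAt.mul (hC'd x).hasDerivAt.ofReal_comp))
  have HW3 : ∀ x : ℝ, HasDerivAt (fun y => C y * deriv S y - deriv C y * S y)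
      (deriv C x * deriv S x + C x * deriv (deriv S) x
        - (deriv (deriv C) x * S x + deriv C x * deriv S x)) x := by
    intro x
    exact (((hCd x).hasDerivAt.mul (hS'd x).hasDerivAt).sub
      ((hC'd x).hasDerivAt.mul (hSd x).hasDerivAt))
  have hW1 : ∀ x ∈ Icc (0:ℝ) L,
      deriv f x * ((S x : ℝ) : ℂ) - f x * ((deriv S x : ℝ) : ℂ) = -(f 0) := by
    have := constOn hL (fun x => (HW1 x).differentiableAt) (fun x hx => by
      rw [(HW1 x).deriv, hfODE x hx, hSODE x hx]; push_cast; ring)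
    intro x hx
    rw [this x hx, hS0, hS0']; push_cast; ring
  have hW2 : ∀ x ∈ Icc (0:ℝ) L,
      deriv f x * ((C x : ℝ) : ℂ) - f x * ((deriv C x : ℝ) : ℂ) = deriv f 0 := by
    have := constOn hL (fun x => (HW2 x).differentiableAt) (fun x hx => by
      rw [(HW2 x).deriv, hfODE x hx, hCODE x hx]; push_cast; ring)
    intro x hx
    rw [this x hx, hC0, hC0']; push_cast; ring
  have hW3 : ∀ x ∈ Icc (0:ℝ) L, C x * deriv S x - deriv C x * S x = 1 := by
    have := constOn hL (fun x => (HW3 x).differentiableAt) (fun x hx => by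
      rw [(HW3 x).deriv, hCODE x hx, hSODE x hx]; ring)
    intro x hx
    rw [this x hx, hC0, hC0', hS0, hS0']; ring
  intro x hx
  have e1 := hW1 x hx
  have e2 := hW2 x hx
  have e3 : ((C x : ℝ):ℂ) * ((deriv S x : ℝ):ℂ) - ((deriv C x : ℝ):ℂ) * ((S x : ℝ):ℂ) = 1 := by
    exact_mod_cast hW3 x hx
  linear_combination (-((C x : ℝ):ℂ)) * e1 + ((S x : ℝ):ℂ) * e2 - f x * e3

private lemma edge_int (L s : ℝ) (hs : s ≠ 0) (S : ℝ → ℝ) (hS : Continuous S) (a b : ℂ) :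
    (∫ x in (0:ℝ)..L, ‖(a * ((S (L-x) : ℝ):ℂ) + b * ((S x : ℝ):ℂ)) / ((s:ℝ):ℂ)‖^2)
    = ((∫ x in (0:ℝ)..L, (S x)^2) / s^2 * ‖a‖^2 + (∫ x in (0:ℝ)..L, (S x)^2) / s^2 * ‖b‖^2
        + (2 * (∫ x in (0:ℝ)..L, S (L-x) * S x) / s^2) * ((starRingEnd ℂ) a * b).re) := by
  have hnorm : ∀ z : ℂ, ‖z‖^2 = z.re^2 + z.im^2 := by
    intro z
    rw [Complex.sq_norm, Complex.normSq_apply]; ring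
  have key : ∀ r1 r2 : ℝ, ‖(a * (r1:ℂ) + b * (r2:ℂ)) / ((s:ℝ):ℂ)‖^2
      = (r1^2 * ‖a‖^2 + r2^2 * ‖b‖^2 + (r1*r2) * (2 * ((starRingEnd ℂ) a * b).re)) / s^2 := by
    intro r1 r2
    rw [norm_div, div_pow, Complex.norm_real, Real.norm_eq_abs, sq_abs]
    congr 1
    simp only [hnorm, Complex.add_re, Complex.add_im, Complex.mul_re, Complex.mul_im,
      Complex.ofReal_re, Complex.ofReal_im, Complex.conj_re, Complex.conj_im]
    ring
  simp only [key]
  have c1 : Continuous fun x : ℝ => S (L - x) := hS.comp (continuous_const.sub continuous_id)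
  have i1 : IntervalIntegrable (fun x => S (L-x)^2 * ‖a‖^2) MeasureTheory.volume 0 L :=
    ((c1.pow 2).mul continuous_const).intervalIntegrable 0 L
  have i2 : IntervalIntegrable (fun x => S x^2 * ‖b‖^2) MeasureTheory.volume 0 L :=
    (((hS.pow 2)).mul continuous_const).intervalIntegrable 0 L
  have i3 : IntervalIntegrable (fun x => (S (L-x) * S x) * (2 * ((starRingEnd ℂ) a * b).re))
      MeasureTheory.volume 0 L :=
    ((c1.mul hS).mul continuous_const).intervalIntegrable 0 L
  rw [intervalIntegral.integral_div, intervalIntegral.integral_add (i1.add i2) i3,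
    intervalIntegral.integral_add i1 i2, intervalIntegral.integral_mul_const,
    intervalIntegral.integral_mul_const, intervalIntegral.integral_mul_const]
  have hsub : (∫ x in (0:ℝ)..L, S (L-x)^2) = ∫ x in (0:ℝ)..L, S x ^ 2 := by
    rw [intervalIntegral.integral_comp_sub_left (fun x => S x ^ 2) L]; norm_num
  rw [hsub]; ring

theorem eigenfunction_norm_identity
    (V : Type*) [Fintype V] [DecidableEq V]
    (G : SimpleGraph V) [DecidableRel G.Adj]
    (q : ℕ) (hreg : G.IsRegularOfDegree (q + 1))
    (L : ℝ) (hL : 0 < L) (U : ℝ → ℝ)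
    (hUsym : ∀ x ∈ Icc (0:ℝ) L, U (L - x) = U x)
    (α lam : ℝ)
    (C S : ℝ → ℝ) (hC : ContDiff ℝ 2 C) (hS : ContDiff ℝ 2 S)
    (hCODE : ∀ x ∈ Icc (0:ℝ) L, deriv (deriv C) x = (U x - lam) * C x)
    (hSODE : ∀ x ∈ Icc (0:ℝ) L, deriv (deriv S) x = (U x - lam) * S x)
    (hC0 : C 0 = 1) (hC0' : deriv C 0 = 0) (hS0 : S 0 = 0) (hS0' : deriv S 0 = 1)
    (hs : S L ≠ 0)
    (ψ : V → V → ℝ → ℂ) (ψ0 : V → ℂ)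
    (hsmooth : ∀ u v, G.Adj u v → ContDiff ℝ 2 (ψ u v))
    (hODE : ∀ u v, G.Adj u v → ∀ x ∈ Icc (0:ℝ) L,
      deriv (deriv (ψ u v)) x = (((U x : ℝ) : ℂ) - (lam : ℂ)) * ψ u v x)
    (hrev : ∀ u v, G.Adj u v → ∀ x, ψ v u x = ψ u v (L - x))
    (hcont0 : ∀ u v, G.Adj u v → ψ u v 0 = ψ0 u)
    (hcontL : ∀ u v, G.Adj u v → ψ u v L = ψ0 v)
    (hkirch : ∀ v, ∑ u ∈ G.neighborFinset v, deriv (ψ v u) 0 = (α : ℂ) * ψ0 v) :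
    (1 / 2) * ∑ u : V, ∑ v ∈ G.neighborFinset u, (∫ x in (0:ℝ)..L, ‖ψ u v x‖ ^ 2)
      = ((((q : ℝ) + 1) / (S L) ^ 2) * (∫ x in (0:ℝ)..L, (S x) ^ 2)
          + ((((q : ℝ) + 1) * C L + α * S L) / (S L) ^ 2)
              * (∫ x in (0:ℝ)..L, S (L - x) * S x))
        * ∑ v : V, ‖ψ0 v‖ ^ 2 := by
  have hSd : Differentiable ℝ S := hS.differentiable (by norm_num)
  have hS'd : Differentiable ℝ (deriv S) := derivDiff hS
  have hsc : ((S L : ℝ):ℂ) ≠ 0 := by exact_mod_cast hs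
  have hLmem : L ∈ Icc (0:ℝ) L := ⟨hL.le, le_refl L⟩
  -- symmetry of S : S (L - x) = S L * C x - C L * S x and deriv S L = C L
  have hsymm : ∀ x ∈ Icc (0:ℝ) L, S (L - x) = S L * C x - deriv S L * S x := by
    -- apply `rep` to the complexification of x ↦ S (L - x)
    have hg2 : ContDiff ℝ 2 (fun x : ℝ => S (L - x)) :=
      hS.comp (contDiff_const.sub contDiff_id)
    have hgc : ContDiff ℝ 2 (fun x : ℝ => ((S (L - x) : ℝ) : ℂ)) :=
      Complex.ofRealCLM.contDiff.comp hg2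
    have hder : ∀ x : ℝ, HasDerivAt (fun x : ℝ => S (L - x)) (-(deriv S (L - x))) x := by
      intro x
      have h1 : HasDerivAt (fun y : ℝ => L - y) (-1) x := (hasDerivAt_id x).const_sub L
      have := (hSd (L - x)).hasDerivAt.comp x h1
      exact this.congr_deriv (by ring)
    have hderiv1 : deriv (fun x : ℝ => S (L - x)) = fun x => -(deriv S (L - x)) :=
      funext fun x => (hder x).deriv
    have hder2 : ∀ x : ℝ, HasDerivAt (fun x : ℝ => -(deriv S (L - x)))
        (deriv (deriv S) (L - x)) x := by
      intro x
      have h1 : HasDerivAt (fun y : ℝ => L - y) (-1) x := (hasDerivAt_id x).const_sub L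
      have := ((hS'd (L - x)).hasDerivAt.comp x h1).neg
      exact this.congr_deriv (by ring)
    have hcder : deriv (fun x : ℝ => ((S (L - x) : ℝ) : ℂ))
        = fun x => ((-(deriv S (L - x)) : ℝ) : ℂ) :=
      funext fun x => ((hder x).ofReal_comp).deriv
    have hcder2 : ∀ x : ℝ, deriv (deriv (fun x : ℝ => ((S (L - x) : ℝ) : ℂ))) x
        = ((deriv (deriv S) (L - x) : ℝ) : ℂ) := by
      intro x
      rw [hcder]
      exact ((hder2 x).ofReal_comp).deriv
    have hODEg : ∀ x ∈ Icc (0:ℝ) L,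
        deriv (deriv (fun x : ℝ => ((S (L - x) : ℝ) : ℂ))) x
          = (((U x : ℝ) : ℂ) - (lam : ℂ)) * ((S (L - x) : ℝ) : ℂ) := by
      intro x hx
      have hx' : L - x ∈ Icc (0:ℝ) L := ⟨by linarith [hx.2], by linarith [hx.1]⟩
      rw [hcder2 x, hSODE (L - x) hx', hUsym x hx]
      push_cast; ring
    have := rep hL hC hS hCODE hSODE hC0 hC0' hS0 hS0' _ hgc hODEg
    intro x hx
    have h := this x hx
    simp only [sub_zero, hcder] at h
    have h' : ((S (L - x) : ℝ) : ℂ) = ((S L : ℝ):ℂ) * C x - ((deriv S L : ℝ):ℂ) * S x := by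
      rw [h]; push_cast; ring
    exact_mod_cast h'
  have hCL : deriv S L = C L := by
    have h := hsymm L hLmem
    simp only [sub_self, hS0] at h
    have : S L * (C L - deriv S L) = 0 := by linarith [h]
    rcases mul_eq_zero.mp this with h' | h'
    · exact absurd h' hs
    · linarith
  -- coefficient of each edge function
  have hrep : ∀ u v, G.Adj u v → (∀ x ∈ Icc (0:ℝ) L,
      ψ u v x = ψ0 u * C x + deriv (ψ u v) 0 * S x) := by
    intro u v huv
    have := rep hL hC hS hCODE hSODE hC0 hC0' hS0 hS0' (ψ u v) (hsmooth u v huv)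
      (hODE u v huv)
    intro x hx
    rw [← hcont0 u v huv]
    exact this x hx
  have hcoef : ∀ u v, G.Adj u v →
      deriv (ψ u v) 0 = (ψ0 v - ψ0 u * C L) / ((S L : ℝ):ℂ) := by
    intro u v huv
    have h := hrep u v huv L hLmem
    rw [hcontL u v huv] at h
    field_simp
    linear_combination -h
  have hform : ∀ u v, G.Adj u v → ∀ x ∈ Icc (0:ℝ) L,
      ψ u v x = (ψ0 u * ((S (L - x) : ℝ):ℂ) + ψ0 v * ((S x : ℝ):ℂ)) / ((S L : ℝ):ℂ) := by
    intro u v huv x hx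
    have hsx : ((S (L - x) : ℝ):ℂ) = ((S L : ℝ):ℂ) * C x - ((C L : ℝ):ℂ) * S x := by
      have := hsymm x hx
      rw [hCL] at this
      exact_mod_cast this
    rw [hrep u v huv x hx, hcoef u v huv, hsx]
    field_simp
    ring
  -- eigenvalue relation for the vertex values
  have hdeg : ∀ u : V, (G.neighborFinset u).card = q + 1 := fun u => hreg u
  have heig : ∀ u : V, ∑ v ∈ G.neighborFinset u, ψ0 v
      = ((((q : ℝ) + 1) * C L + α * S L : ℝ) : ℂ) * ψ0 u := by
    intro u
    have hk := hkirch u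
    have hk' : ∑ v ∈ G.neighborFinset u, (ψ0 v - ψ0 u * C L) / ((S L : ℝ):ℂ)
        = (α : ℂ) * ψ0 u := by
      rw [← hk]
      refine Finset.sum_congr rfl fun v hv => ?_
      rw [hcoef u v ((G.mem_neighborFinset u v).mp hv)]
    rw [← Finset.sum_div, Finset.sum_sub_distrib, Finset.sum_const, hdeg u] at hk'
    have h2 : ∑ v ∈ G.neighborFinset u, ψ0 v
        - ((q : ℂ) + 1) * (ψ0 u * ((C L : ℝ):ℂ)) = (α : ℂ) * ψ0 u * ((S L : ℝ):ℂ) := by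
      field_simp at hk'
      push_cast at hk' ⊢
      linear_combination hk'
    push_cast
    linear_combination h2
  -- per-edge integral
  have hedge : ∀ u v, G.Adj u v → (∫ x in (0:ℝ)..L, ‖ψ u v x‖ ^ 2)
      = ((∫ x in (0:ℝ)..L, (S x)^2) / (S L)^2 * ‖ψ0 u‖^2
        + (∫ x in (0:ℝ)..L, (S x)^2) / (S L)^2 * ‖ψ0 v‖^2
        + (2 * (∫ x in (0:ℝ)..L, S (L-x) * S x) / (S L)^2)
            * ((starRingEnd ℂ) (ψ0 u) * ψ0 v).re) := by
    intro u v huv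
    rw [intervalIntegral.integral_congr (g := fun x =>
        ‖(ψ0 u * ((S (L - x) : ℝ):ℂ) + ψ0 v * ((S x : ℝ):ℂ)) / ((S L : ℝ):ℂ)‖ ^ 2)
      (fun x hx => by
        rw [hform u v huv x (by rwa [uIcc_of_le hL.le] at hx)])]
    exact edge_int L (S L) hs S (hS.continuous) (ψ0 u) (ψ0 v)
  -- assemble
  have hA : ∑ u : V, ∑ v ∈ G.neighborFinset u, ‖ψ0 u‖^2
      = ((q : ℝ) + 1) * ∑ v : V, ‖ψ0 v‖^2 := by
    rw [Finset.mul_sum]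
    refine Finset.sum_congr rfl fun u _ => ?_
    rw [Finset.sum_const, hdeg u, nsmul_eq_mul]
    push_cast; ring
  have hB : ∑ u : V, ∑ v ∈ G.neighborFinset u, ‖ψ0 v‖^2
      = ((q : ℝ) + 1) * ∑ v : V, ‖ψ0 v‖^2 := by
    rw [Finset.sum_comm' (t' := Finset.univ) (s' := fun v => G.neighborFinset v)
      (fun u v => by
        simp only [Finset.mem_univ, true_and, and_true, SimpleGraph.mem_neighborFinset]
        exact G.adj_comm u v)]
    rw [Finset.mul_sum]
    refine Finset.sum_congr rfl fun v _ => ?_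
    rw [Finset.sum_const, hdeg v, nsmul_eq_mul]
    push_cast; ring
  have hR : ∑ u : V, ∑ v ∈ G.neighborFinset u, ((starRingEnd ℂ) (ψ0 u) * ψ0 v).re
      = (((q : ℝ) + 1) * C L + α * S L) * ∑ v : V, ‖ψ0 v‖^2 := by
    rw [Finset.mul_sum]
    refine Finset.sum_congr rfl fun u _ => ?_
    rw [← Complex.re_sum, ← Finset.mul_sum, heig u]
    have h1 : ((starRingEnd ℂ) (ψ0 u) * (((((q : ℝ) + 1) * C L + α * S L : ℝ) : ℂ) * ψ0 u))
        = (((((q : ℝ) + 1) * C L + α * S L : ℝ)) : ℂ) * (ψ0 u * (starRingEnd ℂ) (ψ0 u)) := by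
      ring
    rw [h1, Complex.mul_conj, ← Complex.ofReal_mul, Complex.ofReal_re]
    rw [show Complex.normSq (ψ0 u) = ‖ψ0 u‖^2 by rw [Complex.sq_norm]]
  have hmem : ∀ u v : V, v ∈ G.neighborFinset u → G.Adj u v :=
    fun u v hv => (G.mem_neighborFinset u v).mp hv
  rw [Finset.sum_congr rfl (fun u _ => Finset.sum_congr rfl
    (fun v hv => hedge u v (hmem u v hv)))]
  simp only [Finset.sum_add_distrib, ← Finset.mul_sum]
  rw [hA, hB, hR]
  ring
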